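/- With Φ(L) := Σ_{x < y} (−1)^{ε(x)+ε(y)} L(x,y) as before, suppose six pairwise distinct indices i^0, i^1, j^0, j^1, p^0, p^1 (components i, j, p at levels 0 and 1) are given, and L' agrees with L except that L'(i^1, j^1) = L(i^1, j^1) + δ, L'(i^0, p^1) = L(i^0, p^1) + δ, and L'(j^0, p^0) = L(j^0, p^0) + δ for some δ ∈ ℝ (symmetrically in each argument pair). Then Φ(L') − Φ(L) = δ. -/

import Mathlib

open Finset

/-- Lexicographic order on `I × Bool` with `false < true`. -/
def lexLt {I : Type*} [LinearOrder I] (x y : I × Bool) : Prop :=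
  x.1 < y.1 ∨ (x.1 = y.1 ∧ x.2 = false ∧ y.2 = true)

instance {I : Type*} [LinearOrder I] (x y : I × Bool) : Decidable (lexLt x y) := by
  unfold lexLt; infer_instance

/-- `ε(i,b) = if b then 1 else 0`. -/
def eps {I : Type*} (x : I × Bool) : ℕ := if x.2 then 1 else 0

/-- The signed sum `Φ(L) = Σ_{x < y} (−1)^{ε(x)+ε(y)} L(x,y)`. -/
def Phi {I : Type*} [Fintype I] [LinearOrder I]
    (L : I × Bool → I × Bool → ℝ) : ℝ :=
  ∑ p ∈ (Finset.univ : Finset ((I × Bool) × (I × Bool))).filter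
      (fun p => lexLt p.1 p.2),
    (-1 : ℝ) ^ (eps p.1 + eps p.2) * L p.1 p.2

lemma pair_eq_aux {α : Type*} [DecidableEq α] {x y a b : α}
    (h : ({x, y} : Finset α) = {a, b}) :
    (x = a ∧ y = b) ∨ (x = b ∧ y = a) := by
  have h' : ({x, y} : Set α) = {a, b} := by
    have := congrArg (fun s : Finset α => (s : Set α)) h
    simpa using this
  exact Set.pair_eq_pair_iff.mp h'

lemma lexLt_trich {I : Type*} [LinearOrder I] {x y : I × Bool} (h : x ≠ y) :
    lexLt x y ∨ lexLt y x := by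
  rcases lt_trichotomy x.1 y.1 with h1 | h1 | h1
  · exact Or.inl (Or.inl h1)
  · have h2 : x.2 ≠ y.2 := by
      intro h2; exact h (Prod.ext h1 h2)
    cases hx : x.2 <;> cases hy : y.2
    · simp [hx, hy] at h2
    · exact Or.inl (Or.inr ⟨h1, hx, hy⟩)
    · exact Or.inr (Or.inr ⟨h1.symm, hy, hx⟩)
    · simp [hx, hy] at h2
  · exact Or.inr (Or.inl h1)

lemma lexLt_asymm {I : Type*} [LinearOrder I] {x y : I × Bool} (h : lexLt x y) :
    ¬ lexLt y x := by
  rcases h with h | ⟨h1, h2, h3⟩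
  · rintro (h' | ⟨h1', _⟩)
    · exact absurd h' (lt_asymm h)
    · exact absurd h1' (ne_of_gt h)
  · rintro (h' | ⟨_, h2', h3'⟩)
    · exact absurd h1 (ne_of_gt h')
    · rw [h3'] at h2; exact Bool.false_ne_true h2.symm

set_option maxHeartbeats 1000000 in
theorem stmt5 {I : Type*} [Fintype I] [LinearOrder I]
    (i j p : I) (hij : i ≠ j) (hip : i ≠ p) (hjp : j ≠ p) (δ : ℝ)
    (L L' : I × Bool → I × Bool → ℝ)
    (hLsymm : ∀ x y, L x y = L y x) (hL'symm : ∀ x y, L' x y = L' y x)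
    (h1 : L' (i, true) (j, true) = L (i, true) (j, true) + δ)
    (h2 : L' (i, false) (p, true) = L (i, false) (p, true) + δ)
    (h3 : L' (j, false) (p, false) = L (j, false) (p, false) + δ)
    (hrest : ∀ x y : I × Bool,
      ¬ (({x, y} : Finset (I × Bool)) = {(i, true), (j, true)} ∨
         ({x, y} : Finset (I × Bool)) = {(i, false), (p, true)} ∨
         ({x, y} : Finset (I × Bool)) = {(j, false), (p, false)}) →
      L' x y = L x y) :
    Phi L' - Phi L = δ := by
  classical
  set D : (I × Bool) × (I × Bool) → ℝ :=
    fun q => (-1 : ℝ) ^ (eps q.1 + eps q.2) * (L' q.1 q.2 - L q.1 q.2) with hD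
  have hDsymm : ∀ x y, D (y, x) = D (x, y) := by
    intro x y
    simp only [hD]
    rw [hL'symm y x, hLsymm y x, Nat.add_comm (eps y)]
  -- Step A : Phi L' - Phi L = sum over lexLt pairs of D
  have hA : Phi L' - Phi L =
      ∑ q ∈ (Finset.univ : Finset ((I × Bool) × (I × Bool))).filter
        (fun q => lexLt q.1 q.2), D q := by
    rw [Phi, Phi, ← Finset.sum_sub_distrib]
    exact Finset.sum_congr rfl (fun q _ => by simp [hD]; ring)
  -- the swapped sum equals the same
  have hswap : ∑ q ∈ (Finset.univ : Finset ((I × Bool) × (I × Bool))).filter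
        (fun q => lexLt q.2 q.1), D q =
      ∑ q ∈ (Finset.univ : Finset ((I × Bool) × (I × Bool))).filter
        (fun q => lexLt q.1 q.2), D q := by
    apply Finset.sum_equiv (Equiv.prodComm (I × Bool) (I × Bool))
    · intro q
      simp only [Finset.mem_filter, Finset.mem_univ, true_and,
        Equiv.prodComm_apply, Prod.fst_swap, Prod.snd_swap]
    · intro q _
      exact (hDsymm q.1 q.2).symm
  -- D vanishes off the six special pairs
  have hzero : ∀ q : (I × Bool) × (I × Bool),
      q ∉ ({((i, true), (j, true)), ((j, true), (i, true)),
            ((i, false), (p, true)), ((p, true), (i, false)),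
            ((j, false), (p, false)), ((p, false), (j, false))} :
        Finset ((I × Bool) × (I × Bool))) → D q = 0 := by
    rintro ⟨x, y⟩ hq
    simp only [Finset.mem_insert, Finset.mem_singleton, Prod.mk.injEq, not_or] at hq
    have : L' x y = L x y := by
      apply hrest
      rintro (h | h | h) <;> rcases pair_eq_aux h with ⟨hx, hy⟩ | ⟨hx, hy⟩ <;>
        subst hx <;> subst hy <;> tauto
    simp [hD, this]
  -- full sum over all pairs
  have hfull : ∑ q ∈ (Finset.univ : Finset ((I × Bool) × (I × Bool))), D q =
      2 * δ := by
    rw [← Finset.sum_subset (Finset.subset_univ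
      ({((i, true), (j, true)), ((j, true), (i, true)),
        ((i, false), (p, true)), ((p, true), (i, false)),
        ((j, false), (p, false)), ((p, false), (j, false))} :
        Finset ((I × Bool) × (I × Bool)))) (fun q _ hq => hzero q hq)]
    have e1 : L' (j, true) (i, true) = L (j, true) (i, true) + δ := by
      rw [hL'symm, hLsymm]; exact h1
    have e2 : L' (p, true) (i, false) = L (p, true) (i, false) + δ := by
      rw [hL'symm, hLsymm]; exact h2
    have e3 : L' (p, false) (j, false) = L (p, false) (j, false) + δ := by
      rw [hL'symm, hLsymm]; exact h3
    rw [Finset.sum_insert, Finset.sum_insert, Finset.sum_insert,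
        Finset.sum_insert, Finset.sum_insert, Finset.sum_singleton] <;>
      simp [hD, Prod.ext_iff, hij, hip, hjp, hij.symm, hip.symm, hjp.symm,
        eps, h1, h2, h3, e1, e2, e3]
    ring
  -- D vanishes on the diagonal
  have hdiag : ∀ x : I × Bool, D (x, x) = 0 := by
    intro x
    have : L' x x = L x x := by
      apply hrest
      rintro (h | h | h) <;> rcases pair_eq_aux h with ⟨hx, hy⟩ | ⟨hx, hy⟩ <;>
        rw [hx] at hy <;> simp only [Prod.mk.injEq] at hy <;> tauto
    simp [hD, this]
  -- split the full sum
  have hsplit : ∑ q ∈ (Finset.univ : Finset ((I × Bool) × (I × Bool))), D q =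
      ∑ q ∈ (Finset.univ : Finset ((I × Bool) × (I × Bool))).filter
        (fun q => lexLt q.1 q.2), D q +
      ∑ q ∈ (Finset.univ : Finset ((I × Bool) × (I × Bool))).filter
        (fun q => lexLt q.2 q.1), D q := by
    rw [← Finset.sum_filter_add_sum_filter_not (Finset.univ)
      (fun q => lexLt q.1 q.2) D]
    congr 1
    have hsub : (Finset.univ : Finset ((I × Bool) × (I × Bool))).filter
        (fun q => lexLt q.2 q.1) ⊆ (Finset.univ).filter
        (fun q => ¬ lexLt q.1 q.2) := by
      intro q hq
      simp only [Finset.mem_filter, Finset.mem_univ, true_and] at hq ⊢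
      exact lexLt_asymm hq
    rw [Finset.sum_subset hsub]
    intro q hq hq'
    simp only [Finset.mem_filter, Finset.mem_univ, true_and] at hq hq'
    have he : q.1 = q.2 := by
      by_contra he
      rcases lexLt_trich he with h' | h'
      · exact hq h'
      · exact hq' h'
    obtain ⟨a, b⟩ := q
    have hab : a = b := he
    subst hab
    exact hdiag a
  linarith [hA, hswap, hfull, hsplit]
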